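/- For all integers k, l ≥ 1, the super Catalan number (2k)!·(2l)! / (k!·l!·(k+l)!) is a positive integer. -/

import Mathlib

theorem superCatalan_aux : ∀ l k : ℕ, ∃ c : ℕ, 0 < c ∧
    Nat.factorial (2 * k) * Nat.factorial (2 * l) =
      c * (Nat.factorial k * Nat.factorial l * Nat.factorial (k + l)) := by
  intro l
  induction l with
  | zero =>
    intro k
    refine ⟨(2 * k).choose k, Nat.choose_pos (by omega), ?_⟩
    have h := Nat.choose_mul_factorial_mul_factorial (show k ≤ 2 * k by omega)
    have h2 : 2 * k - k = k := by omega
    rw [h2] at h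
    simp [Nat.factorial]
    rw [← h]
    ring
  | succ l ih =>
    intro k
    obtain ⟨a, ha, hA⟩ := ih k
    obtain ⟨b, hb, hB⟩ := ih (k + 1)
    set D := Nat.factorial k * Nat.factorial l * Nat.factorial (k + l) with hD
    have hDpos : 0 < D := by positivity
    have e1 : Nat.factorial (2 * (k + 1)) = (2 * k + 2) * ((2 * k + 1) * Nat.factorial (2 * k)) := by
      have : 2 * (k + 1) = (2 * k + 1) + 1 := by ring
      rw [this, Nat.factorial_succ, Nat.factorial_succ]
    have e2 : Nat.factorial (k + 1) = (k + 1) * Nat.factorial k := Nat.factorial_succ k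
    have e3 : Nat.factorial (k + 1 + l) = (k + l + 1) * Nat.factorial (k + l) := by
      have : k + 1 + l = (k + l) + 1 := by ring
      rw [this, Nat.factorial_succ]
    rw [e1, e2, e3] at hB
    have h2 : (k + 1) * (2 * (2 * k + 1) * a * D) = (k + 1) * (b * (k + l + 1) * D) := by
      calc (k + 1) * (2 * (2 * k + 1) * a * D)
          = (k + 1) * (2 * (2 * k + 1) * (a * D)) := by ring
        _ = (2 * k + 2) * ((2 * k + 1) * Nat.factorial (2 * k)) * Nat.factorial (2 * l) := by
            rw [← hA]; ring
        _ = b * ((k + 1) * Nat.factorial k * Nat.factorial l *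
              ((k + l + 1) * Nat.factorial (k + l))) := hB
        _ = (k + 1) * (b * (k + l + 1) * D) := by rw [hD]; ring
    have key : 2 * (2 * k + 1) * a * D = b * (k + l + 1) * D :=
      Nat.eq_of_mul_eq_mul_left (by omega) h2
    have key' : 2 * (2 * k + 1) * a = b * (k + l + 1) :=
      Nat.eq_of_mul_eq_mul_right hDpos key
    have hlt : b < 4 * a := by
      have h3 : b * (k + l + 1) < 4 * a * (k + l + 1) := by
        calc b * (k + l + 1) = 2 * (2 * k + 1) * a := key'.symm
          _ < 4 * (k + l + 1) * a := (mul_lt_mul_iff_left₀ ha).mpr (by omega)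
          _ = 4 * a * (k + l + 1) := by ring
      exact (mul_lt_mul_iff_left₀ (show 0 < k + l + 1 by omega)).mp h3
    refine ⟨4 * a - b, by omega, ?_⟩
    have key2 : (4 * a - b) * (k + l + 1) = 2 * (2 * l + 1) * a := by
      zify [le_of_lt hlt]
      have hz : (2 : ℤ) * (2 * k + 1) * a = b * (k + l + 1) := by exact_mod_cast key'
      linear_combination hz
    have f1 : Nat.factorial (2 * (l + 1)) = (2 * l + 2) * ((2 * l + 1) * Nat.factorial (2 * l)) := by
      have : 2 * (l + 1) = (2 * l + 1) + 1 := by ring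
      rw [this, Nat.factorial_succ, Nat.factorial_succ]
    have f2 : Nat.factorial (l + 1) = (l + 1) * Nat.factorial l := Nat.factorial_succ l
    have f3 : Nat.factorial (k + (l + 1)) = (k + l + 1) * Nat.factorial (k + l) := by
      have : k + (l + 1) = (k + l) + 1 := by ring
      rw [this, Nat.factorial_succ]
    rw [f1, f2, f3]
    calc Nat.factorial (2 * k) * ((2 * l + 2) * ((2 * l + 1) * Nat.factorial (2 * l)))
        = (l + 1) * (2 * (2 * l + 1) * (Nat.factorial (2 * k) * Nat.factorial (2 * l))) := by ring
      _ = (l + 1) * (2 * (2 * l + 1) * (a * D)) := by rw [hA]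
      _ = 2 * (2 * l + 1) * a * ((l + 1) * D) := by ring
      _ = (4 * a - b) * (k + l + 1) * ((l + 1) * D) := by rw [key2]
      _ = (4 * a - b) * (Nat.factorial k * ((l + 1) * Nat.factorial l) *
            ((k + l + 1) * Nat.factorial (k + l))) := by rw [hD]; ring

theorem superCatalan_pos_integer (k l : ℕ) (hk : 1 ≤ k) (hl : 1 ≤ l) :
    ∃ c : ℕ, 0 < c ∧
      Nat.factorial (2 * k) * Nat.factorial (2 * l) =
        c * (Nat.factorial k * Nat.factorial l * Nat.factorial (k + l)) := by
  exact superCatalan_aux l k
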